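/- Let Λ be an m×m real positive definite matrix with lower triangular Cholesky factor L (so Λ = L Lᵀ with L lower triangular and positive diagonal entries). If e is a zero-mean random vector with covariance Λ, then for indices j < i, the variance of the error of the best linear estimate of e_i given (e_1,...,e_j) equals ∑_{k=j+1}^{i} L_{ik}². (Deterministic form: the Schur complement variance λ_{i|j} := Λ_{ii} − Λ_{i,1:j} (Λ_{1:j,1:j})^{-1} Λ_{1:j,i} equals ∑_{k=j+1}^{i} L_{ik}².) -/

import Mathlib

open Matrix BigOperators

/-- Variance of best linear prediction error equals sum of squared Cholesky
entries: `λ_{i|j} = ∑_{k=j+1}^{i} L_{ik}²` (0-based: sum over `j ≤ k ≤ i`). -/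
theorem stmt_0 (m : ℕ) (Λ L : Matrix (Fin m) (Fin m) ℝ)
    (hΛ : Λ.PosDef)
    (hLtri : ∀ i j : Fin m, i < j → L i j = 0)
    (hLdiag : ∀ i : Fin m, 0 < L i i)
    (hfac : Λ = L * Lᵀ)
    (i : Fin m) (j : ℕ) (hj : j ≤ (i : ℕ)) :
    Λ i i -
      (fun a : Fin j => Λ i (Fin.castLE (hj.trans i.isLt.le) a)) ⬝ᵥ
        ((Λ.submatrix (Fin.castLE (hj.trans i.isLt.le)) (Fin.castLE (hj.trans i.isLt.le)))⁻¹ *ᵥ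
          (fun a : Fin j => Λ (Fin.castLE (hj.trans i.isLt.le) a) i))
      = ∑ k ∈ Finset.univ.filter (fun k : Fin m => j ≤ (k : ℕ) ∧ (k : ℕ) ≤ (i : ℕ)),
          (L i k) ^ 2 := by
  have hjm : j ≤ m := hj.trans i.isLt.le
  set e : Fin j → Fin m := Fin.castLE hjm with he
  -- membership of the image of the embedding
  have hmem : ∀ k : Fin m, k ∈ Finset.univ.map (Fin.castLEEmb hjm) ↔ (k : ℕ) < j := by
    intro k
    simp only [Finset.mem_map, Finset.mem_univ, true_and]
    constructor
    · rintro ⟨a, rfl⟩; exact a.isLt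
    · intro hk; exact ⟨⟨(k : ℕ), hk⟩, by ext; simp [Fin.castLEEmb]⟩
  -- sums of functions vanishing above j restrict to Fin j
  have hsum : ∀ f : Fin m → ℝ, (∀ k : Fin m, j ≤ (k : ℕ) → f k = 0) →
      ∑ k : Fin m, f k = ∑ a : Fin j, f (e a) := by
    intro f hf
    rw [show (∑ a : Fin j, f (e a)) = ∑ k ∈ Finset.univ.map (Fin.castLEEmb hjm), f k by
      rw [Finset.sum_map]; rfl]
    refine (Finset.sum_subset (Finset.subset_univ _) ?_).symm
    intro k _ hk
    exact hf k (le_of_not_gt (by simpa [hmem k] using hk))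
  set L₁ : Matrix (Fin j) (Fin j) ℝ := L.submatrix e e with hL₁
  set w : Fin j → ℝ := fun a => L i (e a) with hw
  -- L₁ is invertible
  have hdetL₁ : IsUnit L₁.det := by
    have htri : L₁.BlockTriangular OrderDual.toDual := by
      intro a b hab
      exact hLtri (e a) (e b) (Fin.lt_def.mpr (by rw [he]; exact (OrderDual.toDual_lt_toDual.mp hab)))
    rw [Matrix.det_of_lowerTriangular L₁ htri]
    exact (Finset.prod_pos fun a _ => hLdiag (e a)).ne'.isUnit
  -- Λ entries in terms of L
  have hΛentry : ∀ p q : Fin m, Λ p q = ∑ k : Fin m, L p k * L q k := by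
    intro p q; rw [hfac]; simp [Matrix.mul_apply, Matrix.transpose_apply]
  -- the submatrix factors
  have hA : Λ.submatrix e e = L₁ * L₁ᵀ := by
    ext a b
    rw [Matrix.submatrix_apply, hΛentry, Matrix.mul_apply]
    rw [hsum (fun k => L (e a) k * L (e b) k)
      (fun k hk => mul_eq_zero_of_left (hLtri (e a) k (by simpa [he, Fin.lt_def] using lt_of_lt_of_le a.isLt hk)) _)]
    rfl
  -- the vectors are L₁ *ᵥ w
  have hv : (fun a : Fin j => Λ (e a) i) = L₁ *ᵥ w := by
    funext a
    rw [hΛentry, Matrix.mulVec]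
    rw [hsum (fun k => L (e a) k * L i k)
      (fun k hk => mul_eq_zero_of_left (hLtri (e a) k (by simpa [he, Fin.lt_def] using lt_of_lt_of_le a.isLt hk)) _)]
    rfl
  have hu : (fun a : Fin j => Λ i (e a)) = L₁ *ᵥ w := by
    funext a
    rw [hΛentry, Matrix.mulVec]
    rw [hsum (fun k => L i k * L (e a) k)
      (fun k hk => mul_eq_zero_of_right _ (hLtri (e a) k (by simpa [he, Fin.lt_def] using lt_of_lt_of_le a.isLt hk)))]
    simp [dotProduct, hL₁, hw, mul_comm]
  -- compute the quadratic form
  have hquad : (fun a : Fin j => Λ i (e a)) ⬝ᵥ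
      ((Λ.submatrix e e)⁻¹ *ᵥ (fun a : Fin j => Λ (e a) i)) = ∑ a : Fin j, w a ^ 2 := by
    rw [hu, hv, hA, Matrix.mul_inv_rev, ← Matrix.mulVec_mulVec,
      Matrix.mulVec_mulVec w L₁⁻¹ L₁, Matrix.nonsing_inv_mul L₁ hdetL₁, Matrix.one_mulVec]
    have h1 : (L₁ᵀ)⁻¹ *ᵥ w = w ᵥ* L₁⁻¹ := by
      rw [← Matrix.transpose_nonsing_inv, Matrix.mulVec_transpose]
    rw [h1, dotProduct_comm, Matrix.dotProduct_mulVec, Matrix.vecMul_vecMul,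
      Matrix.nonsing_inv_mul L₁ hdetL₁, Matrix.vecMul_one]
    simp [dotProduct, sq]
  -- Λ i i as full sum of squares
  have hΛii : Λ i i = ∑ k : Fin m, L i k ^ 2 := by
    rw [hΛentry]; exact Finset.sum_congr rfl fun k _ => (sq (L i k)).symm
  rw [hquad, hΛii, sub_eq_iff_eq_add]
  -- split the full sum
  have hsplit : ∑ k : Fin m, L i k ^ 2 =
      (∑ k ∈ Finset.univ.filter (fun k : Fin m => j ≤ (k : ℕ) ∧ (k : ℕ) ≤ (i : ℕ)), L i k ^ 2)
      + ∑ a : Fin j, w a ^ 2 := by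
    have hw2 : ∑ a : Fin j, w a ^ 2 = ∑ k ∈ Finset.univ.filter
        (fun k : Fin m => (k : ℕ) < j), L i k ^ 2 := by
      rw [show (∑ a : Fin j, w a ^ 2) = ∑ k ∈ Finset.univ.map (Fin.castLEEmb hjm),
        L i k ^ 2 by rw [Finset.sum_map]; rfl]
      apply Finset.sum_congr _ fun _ _ => rfl
      ext k; simp [hmem k]
    rw [hw2, ← Finset.sum_filter_add_sum_filter_not Finset.univ
      (fun k : Fin m => (k : ℕ) < j) (fun k => L i k ^ 2), add_comm]
    congr 1
    rw [Finset.sum_filter, Finset.sum_filter]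
    apply Finset.sum_congr rfl
    intro k _
    by_cases h1 : (k : ℕ) < j
    · simp [h1, Nat.not_le.mpr h1]
    · by_cases h2 : (k : ℕ) ≤ (i : ℕ)
      · simp [h1, h2, Nat.not_lt.mp h1]
      · have hz : L i k = 0 := hLtri i k (Fin.lt_def.mpr (Nat.not_le.mp h2))
        simp [h1, h2, hz]
  exact hsplit
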